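/- Let C be a finite tensor category and A an algebra in C such that every simple left A-module is isomorphic to A ⊗ X for some object X of C. Then the category of left A-modules in C is a finite abelian category (every simple A-module has a projective cover and there are finitely many simples up to isomorphism). -/

import Mathlib

open CategoryTheory MonoidalCategory

variable {C : Type*} [Category C] [MonoidalCategory C]

/-- The free left `A`-module `A ⊗ S` on an object `S`. -/
def freeMod (A : Mon C) (S : C) : Mod C A.X where
  X := A.X ⊗ S
  mod := {
    smul := (α_ A.X A.X S).inv ≫ (MonObj.mul ▷ S)
    one_smul := by
      dsimp
      rw [associator_inv_naturality_left_assoc]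
      rw [show MonObj.one ▷ A.X ▷ S ≫ MonObj.mul ▷ S = (MonObj.one ▷ A.X ≫ MonObj.mul) ▷ S from
        (comp_whiskerRight _ _ _).symm, MonObj.one_mul]
      simp
    mul_smul := by
      dsimp
      rw [associator_inv_naturality_left_assoc]
      rw [show MonObj.mul ▷ A.X ▷ S ≫ MonObj.mul ▷ S = (MonObj.mul ▷ A.X ≫ MonObj.mul) ▷ S from
        (comp_whiskerRight _ _ _).symm, MonObj.mul_assoc]
      simp [comp_whiskerRight, whisker_assoc] }

/-- A left `A`-module is simple if it is nonzero and every mono of `A`-modules into it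
is zero or an isomorphism. -/
def SimpleMod [Abelian C] (A : Mon C) (M : Mod C A.X) : Prop :=
  ¬ CategoryTheory.Limits.IsZero M.X ∧
    ∀ (N : Mod C A.X) (f : N ⟶ M), Mono f.hom → (f.hom = 0 ∨ IsIso f.hom)

namespace CategoryTheory.Mod

variable {X : C} [MonObj X]

/-- the action map of a module -/
def act (M : Mod C X) : X ⊗ M.X ⟶ M.X := ModObj.smul (M := X) (X := M.X)

@[simp]
lemma one_act (M : Mod C X) : MonObj.one (X := X) ▷ M.X ≫ M.act = (λ_ M.X).hom :=
  ModObj.one_smul_self X M.X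

@[simp]
lemma one_act_assoc (M : Mod C X) {Z : C} (h : M.X ⟶ Z) :
    MonObj.one (X := X) ▷ M.X ≫ M.act ≫ h = (λ_ M.X).hom ≫ h := by
  rw [← Category.assoc, one_act]

@[simp]
lemma act_assoc (M : Mod C X) :
    MonObj.mul (X := X) ▷ M.X ≫ M.act = (α_ X X M.X).hom ≫ X ◁ M.act ≫ M.act :=
  ModObj.mul_smul_self X M.X

@[simp]
lemma act_assoc_assoc (M : Mod C X) {Z : C} (h : M.X ⟶ Z) :
    MonObj.mul (X := X) ▷ M.X ≫ M.act ≫ h = (α_ X X M.X).hom ≫ X ◁ M.act ≫ M.act ≫ h := by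
  rw [← Category.assoc, act_assoc]; simp only [Category.assoc]

lemma act_assoc_flip (M : Mod C X) :
    X ◁ M.act ≫ M.act = (α_ X X M.X).inv ≫ MonObj.mul (X := X) ▷ M.X ≫ M.act :=
  ModObj.mul_smul_self_flip (M := X) M.X

@[simp]
lemma Hom.act_hom {M N : Mod C X} (f : M ⟶ N) : M.act ≫ f.hom = X ◁ f.hom ≫ N.act :=
  IsModHom.smul_hom (A := X) (f := f.hom)

@[simp]
lemma Hom.act_hom_assoc {M N : Mod C X} (f : M ⟶ N) {Z : C} (h : N.X ⟶ Z) :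
    M.act ≫ f.hom ≫ h = X ◁ f.hom ≫ N.act ≫ h := by
  rw [← Category.assoc, Hom.act_hom, Category.assoc]

end CategoryTheory.Mod

lemma freeMod_act (A : Mon C) (S : C) :
    (freeMod A S).act = (α_ A.X A.X S).inv ≫ (MonObj.mul (X := A.X) ▷ S) := rfl

/-- build a module from an action satisfying the axioms -/
def mkMod {M : C} [MonObj M] (X : C) (act : M ⊗ X ⟶ X)
    (one_act : MonObj.one (X := M) ▷ X ≫ act = (λ_ X).hom)
    (assoc : MonObj.mul (X := M) ▷ X ≫ act = (α_ M M X).hom ≫ M ◁ act ≫ act) : Mod C M :=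
  letI : ModObj M X := { smul := act, one_smul := one_act, mul_smul := assoc }
  ⟨X⟩

/-- build a module morphism -/
def homMk {M : C} [MonObj M] {P Q : Mod C M} (f : P.X ⟶ Q.X)
    (h : P.act ≫ f = M ◁ f ≫ Q.act) : P ⟶ Q := Mod.Hom.mk' f h

@[simp]
lemma homMk_hom {M : C} [MonObj M] {P Q : Mod C M} (f : P.X ⟶ Q.X)
    (h : P.act ≫ f = M ◁ f ≫ Q.act) : (homMk f h).hom = f := rfl

set_option linter.unusedSectionVars false
set_option maxHeartbeats 1600000

namespace Stmt7Aux

open CategoryTheory.Limits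

noncomputable section

variable {C : Type*} [Category C] [Abelian C] [MonoidalCategory C]
variable [RigidCategory C] [MonoidalPreadditive C]
variable (k : Type*) [Field k] [Linear k C] [MonoidalLinear k C]
variable [∀ X Y : C, FiniteDimensional k (X ⟶ Y)]
variable {A : Mon C}

instance tensorLeft_isLeftAdjoint (X : C) : (tensorLeft X).IsLeftAdjoint :=
  (tensorLeftAdjunction (ᘁX) X).isLeftAdjoint

instance tensorLeft_isRightAdjoint (X : C) : (tensorLeft X).IsRightAdjoint :=
  (tensorLeftAdjunction X (Xᘁ)).isRightAdjoint

instance tensorRight_isRightAdjoint (X : C) : (tensorRight X).IsRightAdjoint :=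
  (tensorRightAdjunction (ᘁX) X).isRightAdjoint

instance tensorLeft_preservesColimits (X : C) : PreservesColimitsOfSize.{0, 0} (tensorLeft X) :=
  (Adjunction.ofIsLeftAdjoint (tensorLeft X)).leftAdjoint_preservesColimits

lemma epi_whiskerLeft (X : C) {Y Z : C} (g : Y ⟶ Z) [Epi g] : Epi (X ◁ g) := by
  have h := (tensorLeft X).map_epi g
  simpa using h

lemma mono_whiskerLeft (X : C) {Y Z : C} (g : Y ⟶ Z) [Mono g] : Mono (X ◁ g) := by
  have h := (tensorLeft X).map_mono g
  simpa using h

lemma mono_whiskerRight (X : C) {Y Z : C} (g : Y ⟶ Z) [Mono g] : Mono (g ▷ X) := by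
  have h := (tensorRight X).map_mono g
  simpa using h

lemma epi_of_epi_hom {M N : Mod C A.X} (f : M ⟶ N) (h : Epi f.hom) : Epi f :=
  ⟨fun g h' w => by ext; exact (cancel_epi f.hom).mp (congrArg Mod.Hom.hom w)⟩

lemma isIso_of_isIso_hom {M N : Mod C A.X} (f : M ⟶ N) (h : IsIso f.hom) : IsIso f := by
  refine ⟨⟨homMk (inv f.hom) ?_, ?_, ?_⟩⟩
  · rw [← cancel_mono f.hom]; simp
  · ext; simp
  · ext; simp

/-- the underlying isomorphism of an isomorphism of modules -/
@[simps]
def isoHom {M N : Mod C A.X} (i : M ≅ N) : M.X ≅ N.X where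
  hom := i.hom.hom
  inv := i.inv.hom
  hom_inv_id := by rw [← Mod.comp_hom', i.hom_inv_id]; rfl
  inv_hom_id := by rw [← Mod.comp_hom', i.inv_hom_id]; rfl

section Cokernel

variable {M N : Mod C A.X} (f : M ⟶ N)

lemma wzero : A.X ◁ f.hom ≫ N.act ≫ cokernel.π f.hom = 0 := by
  rw [← Mod.Hom.act_hom_assoc]
  simp

/-- the action on the cokernel -/
def actQ : A.X ⊗ cokernel f.hom ⟶ cokernel f.hom :=
  (PreservesCokernel.iso (tensorLeft A.X) f.hom).hom ≫
    cokernel.desc _ (N.act ≫ cokernel.π f.hom) (wzero f)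

lemma hact : A.X ◁ cokernel.π f.hom ≫ actQ f = N.act ≫ cokernel.π f.hom := by
  have h1 : (tensorLeft A.X).map (cokernel.π f.hom) ≫
      (PreservesCokernel.iso (tensorLeft A.X) f.hom).hom
        = cokernel.π ((tensorLeft A.X).map f.hom) := by
    rw [← Iso.eq_comp_inv, PreservesCokernel.iso_inv, π_comp_cokernelComparison]
  have h1' : A.X ◁ cokernel.π f.hom ≫ (PreservesCokernel.iso (tensorLeft A.X) f.hom).hom
      = cokernel.π (A.X ◁ f.hom) := by simpa using h1
  rw [actQ, ← Category.assoc, h1']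
  simp

/-- the cokernel as a module -/
def Qmod : Mod C A.X := mkMod (cokernel f.hom) (actQ f)
  (by
    have : Epi (𝟙_ C ◁ cokernel.π f.hom) := epi_whiskerLeft _ _
    rw [← cancel_epi (𝟙_ C ◁ cokernel.π f.hom), whisker_exchange_assoc, hact f,
      Mod.one_act_assoc, leftUnitor_naturality])
  (by
    have : Epi ((A.X ⊗ A.X) ◁ cokernel.π f.hom) := epi_whiskerLeft _ _
    rw [← cancel_epi ((A.X ⊗ A.X) ◁ cokernel.π f.hom), whisker_exchange_assoc, hact f,
      Mod.act_assoc_assoc, associator_naturality_right_assoc,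
      ← MonoidalCategory.whiskerLeft_comp_assoc, hact f,
      MonoidalCategory.whiskerLeft_comp_assoc]
    rw [hact f])

lemma epi_hom_of_epi [Epi f] : Epi f.hom := by
  let c : N ⟶ Qmod f := homMk (cokernel.π f.hom) (hact f).symm
  let z : N ⟶ Qmod f := homMk 0 (by rw [comp_zero, MonoidalPreadditive.whiskerLeft_zero, zero_comp])
  have hfc : f ≫ c = f ≫ z := by
    ext
    show f.hom ≫ cokernel.π f.hom = f.hom ≫ 0
    simp
  have hcz : c = z := (cancel_epi f).mp hfc
  have h0 : cokernel.π f.hom = 0 := congrArg Mod.Hom.hom hcz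
  exact Abelian.epi_of_cokernel_π_eq_zero (f := f.hom) h0

end Cokernel

section Free

/-- functoriality of free modules -/
def freeMap {X Y : C} (g : X ⟶ Y) : freeMod A X ⟶ freeMod A Y := homMk (A.X ◁ g)
  (by
    show ((α_ A.X A.X X).inv ≫ MonObj.mul ▷ X) ≫ A.X ◁ g = A.X ◁ A.X ◁ g ≫ (α_ A.X A.X Y).inv ≫ MonObj.mul ▷ Y
    simp only [Category.assoc]
    rw [associator_inv_naturality_right_assoc, whisker_exchange])

/-- free modules on isomorphic objects are isomorphic -/
def freeIso {X Y : C} (g : X ≅ Y) : freeMod A X ≅ freeMod A Y where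
  hom := freeMap g.hom
  inv := freeMap g.inv
  hom_inv_id := by ext; exact MonoidalCategory.whiskerLeft_hom_inv _ _
  inv_hom_id := by ext; exact MonoidalCategory.whiskerLeft_inv_hom _ _

/-- the module morphism out of a free module induced by a morphism in `C` -/
def freeLift {Q : C} {N : Mod C A.X} (ψ : Q ⟶ N.X) : freeMod A Q ⟶ N := homMk ((A.X ◁ ψ) ≫ N.act)
  (by
    show ((α_ A.X A.X Q).inv ≫ MonObj.mul ▷ Q) ≫ A.X ◁ ψ ≫ N.act = A.X ◁ (A.X ◁ ψ ≫ N.act) ≫ N.act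
    simp only [Category.assoc, MonoidalCategory.whiskerLeft_comp]
    rw [Mod.act_assoc_flip, associator_inv_naturality_right_assoc, whisker_exchange_assoc])

lemma key_unit (Q : C) :
    A.X ◁ ((λ_ Q).inv ≫ MonObj.one (X := A.X) ▷ Q) ≫ (α_ A.X A.X Q).inv ≫ MonObj.mul (X := A.X) ▷ Q = 𝟙 _ := by
  simp only [MonoidalCategory.whiskerLeft_comp, Category.assoc]
  rw [associator_inv_naturality_middle_assoc, ← comp_whiskerRight, MonObj.mul_one]
  simp

lemma projective_freeMod {Q : C} (hQ : Projective Q) : Projective (freeMod A Q) where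
  factors := by
    intro E X f e he
    have hepi : Epi e.hom := epi_hom_of_epi e
    obtain ⟨ψ, hψ⟩ := hQ.factors (((λ_ Q).inv ≫ MonObj.one (X := A.X) ▷ Q : Q ⟶ (freeMod A Q).X) ≫ f.hom) e.hom
    refine ⟨freeLift ψ, ?_⟩
    ext
    show (A.X ◁ ψ ≫ E.act) ≫ e.hom = f.hom
    rw [Category.assoc, e.act_hom, ← MonoidalCategory.whiskerLeft_comp_assoc, hψ,
      MonoidalCategory.whiskerLeft_comp_assoc, ← f.act_hom]
    show A.X ◁ ((λ_ Q).inv ≫ MonObj.one (X := A.X) ▷ Q) ≫ ((α_ A.X A.X Q).inv ≫ MonObj.mul (X := A.X) ▷ Q) ≫ f.hom = f.hom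
    refine ((Category.assoc _ _ _).symm).trans ?_
    exact (congrArg (fun t => t ≫ f.hom) (key_unit (A := A) Q)).trans (Category.id_comp _)

lemma projective_of_retract {K P : Mod C A.X} (s : K ⟶ P) (r : P ⟶ K) (h : s ≫ r = 𝟙 K)
    (hP : Projective P) : Projective K where
  factors := by
    intro E X f e he
    obtain ⟨L, hL⟩ := hP.factors (r ≫ f) e
    exact ⟨s ≫ L, by rw [Category.assoc, hL, ← Category.assoc, h, Category.id_comp]⟩

end Free

section Fitting
variable (P : Mod C A.X)

/-- the property of being the underlying morphism of a module endomorphism -/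
def IsModEndo (g : P.X ⟶ P.X) : Prop := P.act ≫ g = A.X ◁ g ≫ P.act

lemma isModEndo_id : IsModEndo P (𝟙 P.X) := by simp [IsModEndo]

variable {P}

lemma IsModEndo.comp {f g : P.X ⟶ P.X} (hf : IsModEndo P f) (hg : IsModEndo P g) :
    IsModEndo P (f ≫ g) := by
  rw [IsModEndo, ← Category.assoc, hf, Category.assoc, hg, MonoidalCategory.whiskerLeft_comp]
  simp

lemma IsModEndo.zero : IsModEndo P 0 := by simp [IsModEndo]

lemma IsModEndo.add {f g : P.X ⟶ P.X} (hf : IsModEndo P f) (hg : IsModEndo P g) :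
    IsModEndo P (f + g) := by
  simp only [IsModEndo] at hf hg ⊢
  simp [Preadditive.comp_add, Preadditive.add_comp,
    MonoidalPreadditive.whiskerLeft_add, hf, hg]

lemma IsModEndo.smul {f : P.X ⟶ P.X} (c : k) (hf : IsModEndo P f) : IsModEndo P (c • f) := by
  simp only [IsModEndo] at hf ⊢
  simp [Linear.comp_smul, Linear.smul_comp, MonoidalLinear.whiskerLeft_smul, hf]

/-- powers of an endomorphism -/
def pw (v : P.X ⟶ P.X) : ℕ → (P.X ⟶ P.X)
  | 0 => 𝟙 P.X
  | n + 1 => pw v n ≫ v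

lemma pw_one (v : P.X ⟶ P.X) : pw v 1 = v := by simp [pw]

lemma pw_add (v : P.X ⟶ P.X) (m n : ℕ) : pw v (m + n) = pw v m ≫ pw v n := by
  induction n with
  | zero => simp [pw]
  | succ n ih => rw [← Nat.add_assoc, pw, pw, ih, Category.assoc]

lemma pw_comm (v : P.X ⟶ P.X) (m n : ℕ) : pw v m ≫ pw v n = pw v n ≫ pw v m := by
  rw [← pw_add, ← pw_add, Nat.add_comm]

lemma pw_isModEndo {v : P.X ⟶ P.X} (hv : IsModEndo P v) (n : ℕ) : IsModEndo P (pw v n) := by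
  induction n with
  | zero => exact isModEndo_id P
  | succ n ih => exact ih.comp hv

/-- the submodule of elements that are module endomorphisms commuting with all powers of `v` -/
def goodSub (v : P.X ⟶ P.X) (hv : IsModEndo P v) : Submodule k (P.X ⟶ P.X) where
  carrier := {f | IsModEndo P f ∧ ∀ m, pw v m ≫ f = f ≫ pw v m}
  add_mem' := by
    rintro a b ⟨ha1, ha2⟩ ⟨hb1, hb2⟩
    exact ⟨ha1.add hb1, fun m => by
      simp [Preadditive.comp_add, Preadditive.add_comp, ha2 m, hb2 m]⟩
  zero_mem' := ⟨IsModEndo.zero, fun m => by simp⟩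
  smul_mem' := by
    rintro c a ⟨ha1, ha2⟩
    exact ⟨IsModEndo.smul k c ha1, fun m => by simp [Linear.comp_smul, Linear.smul_comp, ha2 m]⟩

/-- the span of the powers of `v` of exponent at least `n` -/
def Wp (v : P.X ⟶ P.X) (n : ℕ) : Submodule k (P.X ⟶ P.X) :=
  Submodule.span k (Set.range fun m : ℕ => pw v (n + m))

lemma Wp_le_goodSub {v : P.X ⟶ P.X} (hv : IsModEndo P v) (n : ℕ) :
    Wp k v n ≤ goodSub k v hv := by
  rw [Wp, Submodule.span_le]
  rintro x ⟨m, rfl⟩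
  exact ⟨pw_isModEndo hv _, fun m' => pw_comm v m' _⟩

/-- precomposition as a linear map -/
def pre (g : P.X ⟶ P.X) : (P.X ⟶ P.X) →ₗ[k] (P.X ⟶ P.X) where
  toFun f := g ≫ f
  map_add' a b := by simp [Preadditive.comp_add]
  map_smul' c a := by simp [Linear.comp_smul]

lemma map_pre_Wp (v : P.X ⟶ P.X) (a n : ℕ) :
    Submodule.map (pre k (pw v a)) (Wp k v n) = Wp k v (a + n) := by
  rw [Wp, Wp, Submodule.map_span]
  congr 1
  ext x
  constructor
  · rintro ⟨y, ⟨m, rfl⟩, rfl⟩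
    exact ⟨m, by simp [pre, ← pw_add, Nat.add_assoc]⟩
  · rintro ⟨m, rfl⟩
    exact ⟨pw v (n + m), ⟨m, rfl⟩, by simp [pre, ← pw_add, Nat.add_assoc]⟩

lemma Wp_antitone (v : P.X ⟶ P.X) (n : ℕ) : Wp k v (n + 1) ≤ Wp k v n := by
  rw [Wp, Submodule.span_le]
  rintro x ⟨m, rfl⟩
  exact Submodule.subset_span ⟨1 + m, by simp [Nat.add_assoc]⟩

lemma exists_stab (v : P.X ⟶ P.X) : ∃ N, 1 ≤ N ∧ ∀ j, Wp k v N = Wp k v (N + j) := by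
  have hne : (Set.range fun n : ℕ => Module.finrank k (Wp k v (n + 1))).Nonempty :=
    ⟨_, ⟨0, rfl⟩⟩
  obtain ⟨n, hn0⟩ := Nat.sInf_mem hne
  have hn : Module.finrank k (Wp k v (n + 1)) =
      sInf (Set.range fun n : ℕ => Module.finrank k (Wp k v (n + 1))) := hn0
  have hmin : ∀ m : ℕ, sInf (Set.range fun n : ℕ => Module.finrank k (Wp k v (n + 1))) ≤
      Module.finrank k (Wp k v (m + 1)) := fun m => Nat.sInf_le ⟨m, rfl⟩
  refine ⟨n + 1, by omega, ?_⟩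
  have hstep : Wp k v (n + 1 + 1) = Wp k v (n + 1) := by
    apply Submodule.eq_of_le_of_finrank_le (Wp_antitone k v (n + 1))
    rw [hn]
    exact hmin (n + 1)
  intro j
  induction j with
  | zero => rfl
  | succ j ih =>
    have h1 : Wp k v (n + 1 + j + 1) = Submodule.map (pre k (pw v 1)) (Wp k v (n + 1 + j)) := by
      rw [map_pre_Wp, Nat.add_comm 1 (n + 1 + j)]
    have h2 : Wp k v (n + 1 + 1) = Submodule.map (pre k (pw v 1)) (Wp k v (n + 1)) := by
      rw [map_pre_Wp, Nat.add_comm 1 (n + 1)]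
    have : Wp k v (n + 1 + (j + 1)) = Wp k v (n + 1 + 1) := by
      rw [← Nat.add_assoc, h1, ← ih, h2]
    rw [this, hstep]

lemma epi_of_section {P : Mod C A.X} {u s : P ⟶ P} (hs : s ≫ u = 𝟙 P) : Epi u :=
  ⟨fun g h hgh => by
    rw [← Category.id_comp g, ← hs, Category.assoc, hgh, ← Category.assoc, hs,
      Category.id_comp]⟩

lemma fitting_step {P M : Mod C A.X} (e : P ⟶ M) (he : Epi e) (u : P ⟶ P) (hu : u ≫ e = e)
    (hne : ¬ Epi u) :
    ∃ (K : Mod C A.X) (s : K ⟶ P) (r : P ⟶ K), s ≫ r = 𝟙 K ∧ Epi (s ≫ e) ∧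
      Module.finrank k (K.X ⟶ K.X) < Module.finrank k (P.X ⟶ P.X) := by
  have hv : IsModEndo P u.hom := u.act_hom
  set v := u.hom with hvdef
  obtain ⟨N, hN1, hNstab⟩ := exists_stab k v
  have hWN : pw v N ∈ Wp k v N := Submodule.subset_span ⟨0, by simp⟩
  have hmap : Wp k v (N + N) = Submodule.map (pre k (pw v (N + N))) (Wp k v 0) := by
    rw [map_pre_Wp, Nat.add_zero]
  rw [hNstab N, hmap] at hWN
  obtain ⟨w, hwmem, hw0⟩ := hWN
  have hw : pw v (N + N) ≫ w = pw v N := hw0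
  obtain ⟨hwmod, hwcomm⟩ := Wp_le_goodSub k hv 0 hwmem
  set ε := pw v N ≫ w with hεdef
  have hεmod : IsModEndo P ε := (pw_isModEndo hv N).comp hwmod
  have hεmodE : P.act ≫ ε = A.X ◁ ε ≫ P.act := hεmod
  have hpwε : pw v N ≫ ε = pw v N := by
    calc pw v N ≫ ε = (pw v N ≫ pw v N) ≫ w := by rw [hεdef, Category.assoc]
    _ = pw v (N + N) ≫ w := by rw [pw_add]
    _ = pw v N := hw
  have hidem : ε ≫ ε = ε := by
    calc ε ≫ ε = pw v N ≫ (w ≫ pw v N) ≫ w := by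
          simp only [hεdef, Category.assoc]
    _ = pw v N ≫ (pw v N ≫ w) ≫ w := by rw [← hwcomm N]
    _ = (pw v N ≫ ε) ≫ w := by simp only [hεdef, Category.assoc]
    _ = pw v N ≫ w := by rw [hpwε]
    _ = ε := rfl
  have hpwe : ∀ m, pw v m ≫ e.hom = e.hom := by
    intro m
    induction m with
    | zero => simp [pw]
    | succ m ih =>
      have huh : v ≫ e.hom = e.hom := congrArg Mod.Hom.hom hu
      rw [pw, Category.assoc, huh, ih]
  by_cases hε1 : ε = 𝟙 P.X
  · exfalso
    apply hne
    have hs : (pw v (N - 1) ≫ w) ≫ v = 𝟙 P.X := by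
      calc (pw v (N - 1) ≫ w) ≫ v = pw v (N - 1) ≫ (w ≫ pw v 1) := by
            rw [pw_one, Category.assoc]
      _ = pw v (N - 1) ≫ (pw v 1 ≫ w) := by rw [← hwcomm 1]
      _ = (pw v (N - 1) ≫ pw v 1) ≫ w := by rw [Category.assoc]
      _ = pw v N ≫ w := by rw [← pw_add, Nat.sub_add_cancel hN1]
      _ = 𝟙 P.X := hε1
    let s₀ : P ⟶ P := homMk (pw v (N - 1) ≫ w) ((pw_isModEndo hv (N - 1)).comp hwmod : IsModEndo P _)
    have hs₀ : s₀ ≫ u = 𝟙 P := by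
      ext
      exact hs
    exact epi_of_section hs₀
  · have hf2 : ε ≫ (𝟙 P.X - ε) = 0 := by
      simp [Preadditive.comp_sub, hidem]
    let kerObj := kernel (𝟙 P.X - ε)
    let ι : kerObj ⟶ P.X := kernel.ι _
    haveI hmι : Mono ι := inferInstanceAs (Mono (kernel.ι _))
    have hι0 : ι ≫ (𝟙 P.X - ε) = 0 := kernel.condition _
    have hι : ι ≫ ε = ι := by
      have h' : ι ≫ 𝟙 P.X - ι ≫ ε = 0 := by
        simpa [Preadditive.comp_sub] using hι0
      have := sub_eq_zero.mp h'
      simpa using this.symm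
    let π₀ : P.X ⟶ kerObj := kernel.lift _ ε hf2
    have hπι : π₀ ≫ ι = ε := kernel.lift_ι _ _ _
    have hιπ : ι ≫ π₀ = 𝟙 kerObj := by
      rw [← cancel_mono ι, Category.assoc, hπι, hι, Category.id_comp]
    have hfπ : ε ≫ π₀ = π₀ := by
      rw [← cancel_mono ι, Category.assoc, hπι, hidem]
    let Kmod : Mod C A.X :=
      mkMod kerObj (A.X ◁ ι ≫ P.act ≫ π₀)
        (by
          rw [← whisker_exchange_assoc, Mod.one_act_assoc, leftUnitor_naturality_assoc, hιπ,
            Category.comp_id])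
        (by
          simp only [MonoidalCategory.whiskerLeft_comp, Category.assoc]
          rw [← MonoidalCategory.whiskerLeft_comp_assoc A.X π₀ ι, hπι, ← reassoc_of% hεmodE, hfπ,
            reassoc_of% (Mod.act_assoc_flip P), associator_inv_naturality_right_assoc,
            whisker_exchange_assoc, Iso.hom_inv_id_assoc])
    let smod : Kmod ⟶ P := homMk ι (by
      show (A.X ◁ ι ≫ P.act ≫ π₀) ≫ ι = A.X ◁ ι ≫ P.act
      rw [Category.assoc, Category.assoc, hπι, hεmodE, ← MonoidalCategory.whiskerLeft_comp_assoc,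
        hι])
    let rmod : P ⟶ Kmod := homMk π₀ (by
      show P.act ≫ π₀ = A.X ◁ π₀ ≫ (A.X ◁ ι ≫ P.act ≫ π₀)
      rw [← MonoidalCategory.whiskerLeft_comp_assoc, hπι, ← reassoc_of% hεmodE, hfπ])
    have hsr : smod ≫ rmod = 𝟙 Kmod := Mod.hom_ext _ _ hιπ
    refine ⟨Kmod, smod, rmod, hsr, ?_, ?_⟩
    · let T : P ⟶ P := homMk (pw v N) (pw_isModEndo hv N : IsModEndo P _)
      have hfac : (T ≫ rmod) ≫ (smod ≫ e) = e := by
        ext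
        show (pw v N ≫ π₀) ≫ (ι ≫ e.hom) = e.hom
        calc (pw v N ≫ π₀) ≫ (ι ≫ e.hom) = pw v N ≫ (π₀ ≫ ι) ≫ e.hom := by
              simp only [Category.assoc]
        _ = (pw v N ≫ ε) ≫ e.hom := by simp only [hπι, hεdef, Category.assoc]
        _ = pw v N ≫ e.hom := by rw [hpwε]
        _ = e.hom := hpwe N
      haveI : Epi ((T ≫ rmod) ≫ (smod ≫ e)) := by rw [hfac]; exact he
      exact epi_of_epi (T ≫ rmod) (smod ≫ e)
    · let φ : (kerObj ⟶ kerObj) →ₗ[k] (P.X ⟶ P.X) :=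
        { toFun := fun g => π₀ ≫ g ≫ ι
          map_add' := fun a b => by simp [Preadditive.comp_add, Preadditive.add_comp]
          map_smul' := fun c a => by simp [Linear.comp_smul, Linear.smul_comp] }
      have key : ∀ a : kerObj ⟶ kerObj, ι ≫ (π₀ ≫ a ≫ ι) ≫ π₀ = a := by
        intro a
        calc ι ≫ (π₀ ≫ a ≫ ι) ≫ π₀ = (ι ≫ π₀) ≫ a ≫ (ι ≫ π₀) := by simp only [Category.assoc]
        _ = a := by rw [hιπ]; simp
      have hinj : Function.Injective φ := by
        intro a b hab
        have hab' : π₀ ≫ a ≫ ι = π₀ ≫ b ≫ ι := hab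
        calc a = ι ≫ (π₀ ≫ a ≫ ι) ≫ π₀ := (key a).symm
        _ = ι ≫ (π₀ ≫ b ≫ ι) ≫ π₀ := by rw [hab']
        _ = b := key b
      have hrange : (𝟙 P.X - ε) ∉ LinearMap.range φ := by
        rintro ⟨g, hg⟩
        have hg' : π₀ ≫ g ≫ ι = 𝟙 P.X - ε := hg
        have h1 : ε ≫ (π₀ ≫ g ≫ ι) = π₀ ≫ g ≫ ι := by
          rw [← Category.assoc, hfπ]
        rw [hg'] at h1
        have hz : 𝟙 P.X - ε = 0 := by rw [← h1, hf2]
        exact hε1 (sub_eq_zero.mp hz).symm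
      have h1 : Module.finrank k (LinearMap.range φ) =
          Module.finrank k (kerObj ⟶ kerObj) := LinearMap.finrank_range_of_inj hinj
      have h2 : LinearMap.range φ < ⊤ :=
        lt_top_iff_ne_top.mpr (fun h => hrange (h ▸ Submodule.mem_top))
      have h3 := Submodule.finrank_lt h2.ne
      show Module.finrank k (kerObj ⟶ kerObj) < Module.finrank k (P.X ⟶ P.X)
      exact h1 ▸ h3

end Fitting

lemma exists_min {M : Mod C A.X} (n : ℕ) :
    ∀ (P : Mod C A.X) (e : P ⟶ M), Projective P → Epi e →
      Module.finrank k (P.X ⟶ P.X) ≤ n →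
    ∃ (P' : Mod C A.X) (e' : P' ⟶ M), Projective P' ∧ Epi e' ∧
      ∀ u : P' ⟶ P', u ≫ e' = e' → Epi u := by
  induction n with
  | zero =>
    intro P e hP he hd
    by_cases h : ∀ u : P ⟶ P, u ≫ e = e → Epi u
    · exact ⟨P, e, hP, he, h⟩
    · push_neg at h
      obtain ⟨u, hu, hne⟩ := h
      obtain ⟨K, s, r, hsr, hepi, hlt⟩ := fitting_step k e he u hu hne
      omega
  | succ n ih =>
    intro P e hP he hd
    by_cases h : ∀ u : P ⟶ P, u ≫ e = e → Epi u
    · exact ⟨P, e, hP, he, h⟩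
    · push_neg at h
      obtain ⟨u, hu, hne⟩ := h
      obtain ⟨K, s, r, hsr, hepi, hlt⟩ := fitting_step k e he u hu hne
      exact ih K (s ≫ e) (projective_of_retract s r hsr hP) hepi (by omega)

include k in
lemma exists_projective_cover_of_epi {M : Mod C A.X} (P : Mod C A.X) (e : P ⟶ M)
    (hP : Projective P) (he : Epi e) :
    ∃ P' : Mod C A.X, Projective P' ∧ ∃ e' : P' ⟶ M, Epi e' ∧
      ∀ (N : Mod C A.X) (g : N ⟶ P'), Epi (g ≫ e') → Epi g := by
  obtain ⟨P', e', hP', he', hmin⟩ :=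
    exists_min k (Module.finrank k (P.X ⟶ P.X)) P e hP he le_rfl
  refine ⟨P', hP', e', he', fun N g hg => ?_⟩
  haveI := hP'
  haveI := hg
  obtain ⟨h, hh⟩ := Projective.factors e' (g ≫ e')
  have hfac : (h ≫ g) ≫ e' = e' := by rw [Category.assoc]; exact hh
  haveI : Epi (h ≫ g) := hmin _ hfac
  exact epi_of_epi h g

section SimpleAnalysis

lemma isZero_tensor_right (X Y : C) (h : IsZero Y) : IsZero (X ⊗ Y) := by
  rw [IsZero.iff_id_eq_zero] at h ⊢
  rw [← MonoidalCategory.whiskerLeft_id, h, MonoidalPreadditive.whiskerLeft_zero]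

lemma isZero_tensor_left (X Y : C) (h : IsZero X) : IsZero (X ⊗ Y) := by
  rw [IsZero.iff_id_eq_zero] at h ⊢
  rw [← MonoidalCategory.id_whiskerRight, h, MonoidalPreadditive.zero_whiskerRight]

lemma one_mono_or_isZero (hsu : Simple (𝟙_ C)) : Mono (MonObj.one (X := A.X)) ∨ IsZero A.X := by
  by_cases h : MonObj.one (X := A.X) = 0
  · right
    rw [IsZero.iff_id_eq_zero]
    have h1 : (λ_ A.X).inv ≫ MonObj.one (X := A.X) ▷ A.X ≫ MonObj.mul (X := A.X) = 𝟙 A.X := by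
      rw [MonObj.one_mul]; simp
    rw [← h1, h, MonoidalPreadditive.zero_whiskerRight, zero_comp, comp_zero]
  · left
    haveI := hsu
    exact mono_of_nonzero_from_simple h

/-- every simple module is isomorphic to a free module on a simple object -/
lemma simple_mod_iso_free_simple (hsu : Simple (𝟙_ C))
    (hss : ∀ X : C, ¬ IsZero X → ∃ (S : C) (i : S ⟶ X), Simple S ∧ Mono i)
    {M : Mod C A.X} (hM : SimpleMod A M) {X : C} (i : M ≅ freeMod A X) :
    ∃ S : C, Simple S ∧ Nonempty (M ≅ freeMod A S) := by
  have hMnz : ¬ IsZero M.X := hM.1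
  have hAnz : ¬ IsZero A.X := by
    intro hz
    exact hMnz (((isoHom i).isZero_iff).mpr (isZero_tensor_left A.X X hz))
  have hone : Mono (MonObj.one (X := A.X)) := (one_mono_or_isZero hsu).resolve_right hAnz
  have hXnz : ¬ IsZero X := by
    intro hz
    exact hMnz (((isoHom i).isZero_iff).mpr (isZero_tensor_right A.X X hz))
  obtain ⟨S, inc, hS, hmono⟩ := hss X hXnz
  haveI := hS
  haveI := hmono
  -- the free module on S is nonzero
  have hfreeSnz : ¬ IsZero (A.X ⊗ S) := by
    intro hz
    have hη : Mono ((λ_ S).inv ≫ MonObj.one (X := A.X) ▷ S) := by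
      haveI : Mono (MonObj.one (X := A.X) ▷ S) := mono_whiskerRight S (MonObj.one (X := A.X))
      exact mono_comp _ _
    have h0 : (λ_ S).inv ≫ MonObj.one (X := A.X) ▷ S = 0 := hz.eq_of_tgt _ _
    have : 𝟙 S ≫ ((λ_ S).inv ≫ MonObj.one (X := A.X) ▷ S) = 0 ≫ ((λ_ S).inv ≫ MonObj.one (X := A.X) ▷ S) := by
      rw [h0]; simp
    have h1 : (𝟙 S : S ⟶ S) = 0 := (cancel_mono _).mp this
    exact (Simple.not_isZero S) ((Limits.IsZero.iff_id_eq_zero S).mpr h1)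
  -- the map freeMod A S ⟶ M
  let f : freeMod A S ⟶ M := freeMap inc ≫ i.inv
  have hmf : Mono f.hom := by
    show Mono (Mod.Hom.hom (freeMap inc) ≫ i.inv.hom)
    haveI : Mono (Mod.Hom.hom (freeMap (A := A) inc)) := mono_whiskerLeft A.X inc
    haveI : IsIso i.inv.hom := (inferInstanceAs (IsIso (isoHom i).inv))
    exact mono_comp _ _
  rcases hM.2 (freeMod A S) f hmf with h0 | hiso
  · exfalso
    apply hfreeSnz
    rw [IsZero.iff_id_eq_zero]
    haveI := hmf
    have : 𝟙 ((freeMod A S).X) ≫ f.hom = 0 ≫ f.hom := by rw [h0]; simp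
    exact (cancel_mono f.hom).mp this
  · haveI : IsIso f := isIso_of_isIso_hom f hiso
    exact ⟨S, hS, ⟨(asIso f).symm⟩⟩

end SimpleAnalysis

end
end Stmt7Aux

/-- Let `C` be a finite tensor category (abelian, `k`-linear monoidal, rigid, with
finite-dimensional Homs, finitely many simples, simple subobjects of nonzero objects,
and projective covers), and let `A` be an algebra in `C` such that every simple left
`A`-module is isomorphic to a free module `A ⊗ X`.  Then the category of left
`A`-modules is finite: every simple `A`-module has a projective cover, and there are
finitely many simple `A`-modules up to isomorphism. -/
theorem stmt7 {k : Type*} [Field k] [IsAlgClosed k]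
    {C : Type*} [Category C] [Abelian C] [Linear k C] [MonoidalCategory C]
    [RigidCategory C] [MonoidalPreadditive C] [MonoidalLinear k C]
    [∀ X Y : C, FiniteDimensional k (X ⟶ Y)]
    (hsimpleUnit : Simple (𝟙_ C))
    (hss : ∀ X : C, ¬ CategoryTheory.Limits.IsZero X →
      ∃ (S : C) (i : S ⟶ X), Simple S ∧ Mono i)
    (hfinC : ∃ (ι : Type) (_ : Finite ι) (rep : ι → C),
      ∀ S : C, Simple S → ∃ i, Nonempty (S ≅ rep i))
    (hprojC : ∀ X : C, ∃ (P : C), Projective P ∧ ∃ e : P ⟶ X, Epi e)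
    (A : Mon C)
    (hA : ∀ M : Mod C A.X, SimpleMod A M → ∃ X : C, Nonempty (M ≅ freeMod A X)) :
    (∀ M : Mod C A.X, SimpleMod A M →
      ∃ (P : Mod C A.X), Projective P ∧ ∃ e : P ⟶ M, Epi e ∧
        ∀ (N : Mod C A.X) (g : N ⟶ P), Epi (g ≫ e) → Epi g) ∧
    (∃ (ι : Type) (_ : Finite ι) (rep : ι → Mod C A.X),
      ∀ M : Mod C A.X, SimpleMod A M → ∃ i, Nonempty (M ≅ rep i)) := by
  constructor
  · intro M hM
    obtain ⟨X, ⟨i⟩⟩ := hA M hM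
    obtain ⟨Q, hQ, q, hq⟩ := hprojC X
    let e₀ : freeMod A Q ⟶ M := Stmt7Aux.freeMap q ≫ i.inv
    have hepi₀ : Epi e₀ := by
      apply Stmt7Aux.epi_of_epi_hom
      show Epi ((Stmt7Aux.freeMap (A := A) q).hom ≫ i.inv.hom)
      haveI := hq
      haveI : Epi (Mod.Hom.hom (Stmt7Aux.freeMap (A := A) q)) :=
        Stmt7Aux.epi_whiskerLeft A.X q
      haveI : IsIso i.inv.hom := inferInstanceAs (IsIso (Stmt7Aux.isoHom i).inv)
      exact epi_comp _ _
    exact Stmt7Aux.exists_projective_cover_of_epi k _ e₀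
      (Stmt7Aux.projective_freeMod hQ) hepi₀
  · obtain ⟨ι, hfin, rep, hrep⟩ := hfinC
    refine ⟨ι, hfin, fun i => freeMod A (rep i), fun M hM => ?_⟩
    obtain ⟨X, ⟨iM⟩⟩ := hA M hM
    obtain ⟨S, hS, ⟨iS⟩⟩ := Stmt7Aux.simple_mod_iso_free_simple hsimpleUnit hss hM iM
    obtain ⟨j, ⟨e⟩⟩ := hrep S hS
    exact ⟨j, ⟨iS.trans (Stmt7Aux.freeIso e)⟩⟩
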